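/- Let φ be a four-dimensional nilpotent complex Jordan algebra with basis {e₁,e₂,e₃,e₄} such that φ(e₁,e₁)=e₂, φ(e₁,e₃)=e₄, φ(e₁,e₂)=φ(e₁,e₄)=0, and suppose the center is spanned by {e₄}. Then writing φ(e₂,e₃)=a e₄ and φ(e₃,e₃)=b e₂ + c e₄ with a ≠ 0, the vector x = √(1−b) e₁ + e₃ satisfies: x ∉ C²(φ), the images x·x, x·(x·x) are linearly independent, i.e., L_x has a Jordan block of size ≥ 3. -/

import Mathlib

/-- Bilinearity of a plain product. -/
def IsBilin (K : Type*) [Field K] {V : Type*} [AddCommGroup V] [Module K V]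
    (φ : V → V → V) : Prop :=
  (∀ (a : K) (x y z : V), φ (a • x + y) z = a • φ x z + φ y z) ∧
  (∀ (a : K) (x y z : V), φ x (a • y + z) = a • φ x y + φ x z)

/-- Commutativity (symmetry) of the product. -/
def IsComm {V : Type*} (φ : V → V → V) : Prop := ∀ x y, φ x y = φ y x

/-- The Jordan identity. -/
def JordanId {V : Type*} (φ : V → V → V) : Prop :=
  ∀ x y, φ (φ x x) (φ x y) = φ x (φ (φ x x) y)

/-- Lower central series: `lcs K φ 0 = C¹ = V`, and `lcs K φ m` is the term `C^{m+1}`. -/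
def lcs (K : Type*) [Field K] {V : Type*} [AddCommGroup V] [Module K V]
    (φ : V → V → V) : ℕ → Submodule K V
  | 0 => ⊤
  | m + 1 => Submodule.span K {z | ∃ x ∈ lcs K φ m, ∃ y, z = φ x y}

/-- Nilpotency: some term of the lower central series vanishes. -/
def IsNilp (K : Type*) [Field K] {V : Type*} [AddCommGroup V] [Module K V]
    (φ : V → V → V) : Prop := ∃ k, lcs K φ k = ⊥
/-- key lemma towards the (2,2) case. Under the stated hypotheses,
x = √(1−b)·e₁ + e₃ lies outside C²(φ) and x·x, x·(x·x) are linearly independent,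
so L_x has a Jordan block of size ≥ 3. -/
theorem char_seq_two_two_center_lemma
    {V : Type*} [AddCommGroup V] [Module ℂ V] (φ : V → V → V)
    (hbil : IsBilin ℂ φ) (hcomm : IsComm φ) (hjord : JordanId φ)
    (hnilp : IsNilp ℂ φ) (e : Module.Basis (Fin 4) ℂ V)
    (h00 : φ (e 0) (e 0) = e 1) (h02 : φ (e 0) (e 2) = e 3)
    (h01 : φ (e 0) (e 1) = 0) (h03 : φ (e 0) (e 3) = 0)
    (hcenter : ∀ x : V, (∀ y : V, φ x y = 0) ↔ ∃ c : ℂ, x = c • e 3)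
    (a b c : ℂ) (ha : a ≠ 0)
    (h12 : φ (e 1) (e 2) = a • e 3) (h22 : φ (e 2) (e 2) = b • e 1 + c • e 3)
    (s : ℂ) (hs : s ^ 2 = 1 - b) :
    (s • e 0 + e 2) ∉ lcs ℂ φ 1 ∧
    LinearIndependent ℂ
      ![φ (s • e 0 + e 2) (s • e 0 + e 2),
        φ (s • e 0 + e 2) (φ (s • e 0 + e 2) (s • e 0 + e 2))] := by
  obtain ⟨hL, hR⟩ := hbil
  have hz : ∀ z : V, φ 0 z = 0 := by
    intro z
    have h := hL 1 0 0 z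
    simp only [one_smul, add_zero] at h
    exact (left_eq_add.mp h)
  have hz' : ∀ x : V, φ x 0 = 0 := by
    intro x
    have h := hR 1 x 0 0
    simp only [one_smul, add_zero] at h
    exact (left_eq_add.mp h)
  have hsm : ∀ (t : ℂ) (x z : V), φ (t • x) z = t • φ x z := by
    intro t x z
    have h := hL t x 0 z
    simpa [hz] using h
  have hsm' : ∀ (t : ℂ) (x z : V), φ x (t • z) = t • φ x z := by
    intro t x z
    have h := hR t x z 0
    simpa [hz'] using h
  have hadd : ∀ x y z : V, φ (x + y) z = φ x z + φ y z := by
    intro x y z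
    have h := hL 1 x y z
    simpa using h
  have hadd' : ∀ x y z : V, φ x (y + z) = φ x y + φ x z := by
    intro x y z
    have h := hR 1 x y z
    simpa using h
  -- e 3 is central
  have he3 : ∀ y : V, φ (e 3) y = 0 := (hcenter (e 3)).mpr ⟨1, by simp⟩
  have h13 : φ (e 1) (e 3) = 0 := by rw [hcomm]; exact he3 _
  have h23 : φ (e 2) (e 3) = 0 := by rw [hcomm]; exact he3 _
  have h10 : φ (e 1) (e 0) = 0 := by rw [hcomm]; exact h01
  have h20 : φ (e 2) (e 0) = e 3 := by rw [hcomm]; exact h02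
  have h21 : φ (e 2) (e 1) = a • e 3 := by rw [hcomm]; exact h12
  -- φ(e1, e1) = 0 from the Jordan identity
  have h11 : φ (e 1) (e 1) = 0 := by
    have h := hjord (e 0) (e 0)
    rw [h00, h10, hz'] at h
    exact h
  -- the bilinear map
  set B : V →ₗ[ℂ] V →ₗ[ℂ] V := LinearMap.mk₂ ℂ φ hadd hsm hadd' hsm' with hB
  have hBapp : ∀ x y : V, φ x y = B x y := fun x y => rfl
  set S : Submodule ℂ V := Submodule.span ℂ {e 1, e 3} with hS
  have he1S : e 1 ∈ S := Submodule.subset_span (by simp)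
  have he3S : e 3 ∈ S := Submodule.subset_span (by simp)
  have hprod : ∀ x y : V, φ x y ∈ S := by
    intro x y
    rw [hBapp, ← e.sum_repr x, ← e.sum_repr y]
    simp only [map_sum, LinearMap.sum_apply, map_smul, LinearMap.smul_apply]
    apply Submodule.sum_mem; intro j _
    apply Submodule.smul_mem
    apply Submodule.sum_mem; intro i _
    apply Submodule.smul_mem
    have hBij : B (e i) (e j) = φ (e i) (e j) := rfl
    fin_cases i <;> fin_cases j
    · show φ (e 0) (e 0) ∈ S; rw [h00]; exact he1S
    · show φ (e 0) (e 1) ∈ S; rw [h01]; exact S.zero_mem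
    · show φ (e 0) (e 2) ∈ S; rw [h02]; exact he3S
    · show φ (e 0) (e 3) ∈ S; rw [h03]; exact S.zero_mem
    · show φ (e 1) (e 0) ∈ S; rw [h10]; exact S.zero_mem
    · show φ (e 1) (e 1) ∈ S; rw [h11]; exact S.zero_mem
    · show φ (e 1) (e 2) ∈ S; rw [h12]; exact S.smul_mem _ he3S
    · show φ (e 1) (e 3) ∈ S; rw [h13]; exact S.zero_mem
    · show φ (e 2) (e 0) ∈ S; rw [h20]; exact he3S
    · show φ (e 2) (e 1) ∈ S; rw [h21]; exact S.smul_mem _ he3S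
    · show φ (e 2) (e 2) ∈ S; rw [h22]; exact S.add_mem (S.smul_mem _ he1S) (S.smul_mem _ he3S)
    · show φ (e 2) (e 3) ∈ S; rw [h23]; exact S.zero_mem
    · show φ (e 3) (e 0) ∈ S; rw [he3]; exact S.zero_mem
    · show φ (e 3) (e 1) ∈ S; rw [he3]; exact S.zero_mem
    · show φ (e 3) (e 2) ∈ S; rw [he3]; exact S.zero_mem
    · show φ (e 3) (e 3) ∈ S; rw [he3]; exact S.zero_mem
  constructor
  · intro hmem
    have hsub : lcs ℂ φ 1 ≤ S := by
      show Submodule.span ℂ {z | ∃ x ∈ lcs ℂ φ 0, ∃ y, z = φ x y} ≤ S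
      refine Submodule.span_le.mpr ?_
      rintro z ⟨x, -, y, rfl⟩
      exact hprod x y
    have hxS : s • e 0 + e 2 ∈ S := hsub hmem
    have hker : S ≤ LinearMap.ker (e.coord 2) := by
      refine Submodule.span_le.mpr ?_
      rintro z hz
      rcases hz with rfl | rfl <;> simp [LinearMap.mem_ker, Module.Basis.coord_apply, Module.Basis.repr_self,
        Finsupp.single_apply]
    have h2 : e.coord 2 (s • e 0 + e 2) = 0 := hker hxS
    simp [Module.Basis.coord_apply, Module.Basis.repr_self, Finsupp.single_apply] at h2
  · have hx0 : φ (s • e 0 + e 2) (e 0) = s • e 1 + e 3 := by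
      rw [hL, h00, h20]
    have hx1 : φ (s • e 0 + e 2) (e 1) = a • e 3 := by
      rw [hL, h01, h21, smul_zero, zero_add]
    have hx2 : φ (s • e 0 + e 2) (e 2) = s • e 3 + (b • e 1 + c • e 3) := by
      rw [hL, h02, h22]
    have hx3 : φ (s • e 0 + e 2) (e 3) = 0 := by
      rw [hL, h03, h23, smul_zero, zero_add]
    have h1b : s * s + b = 1 := by
      have := hs; ring_nf at this ⊢; linear_combination this
    have hxx : φ (s • e 0 + e 2) (s • e 0 + e 2) = e 1 + (2 * s + c) • e 3 := by
      rw [hR, hx0, hx2, smul_add]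
      match_scalars
      · linear_combination h1b
      · ring
    have hxxx : φ (s • e 0 + e 2) (φ (s • e 0 + e 2) (s • e 0 + e 2)) = a • e 3 := by
      rw [hxx, add_comm (e 1), hR, hx3, hx1, smul_zero, zero_add]
    rw [hxxx, hxx, LinearIndependent.pair_iff]
    intro p q hpq
    have h1 : e.repr (p • (e 1 + (2 * s + c) • e 3) + q • (a • e 3)) 1 = 0 := by
      rw [hpq]; simp
    have h3 : e.repr (p • (e 1 + (2 * s + c) • e 3) + q • (a • e 3)) 3 = 0 := by
      rw [hpq]; simp
    simp [Finsupp.single_apply, Module.Basis.repr_self] at h1 h3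
    subst h1
    simp at h3 ⊢
    rcases h3 with h3 | h3
    · exact h3
    · exact absurd h3 ha
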